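/- Under the piecewise convexification hypotheses with componentwise gap f_j(x) - f_j^k(x) < ε for all j, x ∈ Y^k, the set X_{wE_ap} = {x ∈ ⋃_k W_k : ∄ y ∈ ⋃_k W_k with f(y) ≺ f(x)} is contained in X^ε_{wE_ap} = {x ∈ ⋃_k W^ε_k : ∄ y ∈ ⋃_k W^ε_k with f(y) + ε·e ≺ f(x)}. -/
import Mathlib

lemma exists_weak_dom {m p : ℕ} (hp : 0 < p) (S : Set (Fin m → ℝ)) (hS : IsCompact S)
    (g : (Fin m → ℝ) → Fin p → ℝ) (hg : ContinuousOn g S) {y : Fin m → ℝ} (hy : y ∈ S) :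
    ∃ w ∈ S, (∀ j, g w j ≤ g y j) ∧ ¬∃ y' ∈ S, ∀ j, g y' j < g w j := by
  have hne : (Finset.univ : Finset (Fin p)).Nonempty := ⟨⟨0, hp⟩, Finset.mem_univ _⟩
  set φ : (Fin m → ℝ) → ℝ := fun x => Finset.univ.sup' hne (fun j => g x j - g y j) with hφdef
  have hφ : ContinuousOn φ S := by
    apply ContinuousOn.finset_sup'_apply hne
    intro j _
    exact ((continuous_apply j).comp_continuousOn hg).sub continuousOn_const
  obtain ⟨w, hwS, hmin⟩ := hS.exists_isMinOn ⟨y, hy⟩ hφ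
  have hφy : φ y = 0 := by
    simp [hφdef]
  have hφw : φ w ≤ 0 := hφy ▸ hmin hy
  refine ⟨w, hwS, ?_, ?_⟩
  · intro j
    have := Finset.le_sup' (fun j => g w j - g y j) (Finset.mem_univ j)
    linarith [this.trans hφw]
  · rintro ⟨y', hy'S, hlt⟩
    have h1 : φ y' < φ w := by
      apply Finset.sup'_lt_iff hne |>.2
      intro j _
      have := Finset.le_sup' (fun j => g w j - g y j) (Finset.mem_univ j)
      have := hlt j
      linarith
    exact absurd (hmin hy'S) (not_le.2 h1)

/-- The weakly efficient solution set of the piecewise convexification problem is contained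
in its `ε`-weakly efficient solution set. -/
theorem stmt15 (m p N : ℕ) (Y : Fin N → Set (Fin m → ℝ))
    (hYc : ∀ k, IsCompact (Y k)) (hYne : ∀ k, (Y k).Nonempty)
    (f : (Fin m → ℝ) → Fin p → ℝ) (hf : Continuous f)
    (fk : Fin N → (Fin m → ℝ) → Fin p → ℝ) (hfk : ∀ k, ContinuousOn (fk k) (Y k))
    (ε : ℝ) (hε : 0 < ε)
    (hle : ∀ k, ∀ x ∈ Y k, ∀ j, fk k x j ≤ f x j)
    (hgap : ∀ k, ∀ x ∈ Y k, ∀ j, f x j - fk k x j < ε)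
    (W : Fin N → Set (Fin m → ℝ))
    (hW : ∀ k, W k = {z ∈ Y k | ¬∃ y ∈ Y k, ∀ j, fk k y j < fk k z j})
    (Wε : Fin N → Set (Fin m → ℝ))
    (hWε : ∀ k, Wε k = {z ∈ Y k | ¬∃ y ∈ Y k, ∀ j, fk k y j + ε < fk k z j}) :
    {z ∈ ⋃ k, W k | ¬∃ y ∈ ⋃ k, W k, ∀ j, f y j < f z j} ⊆
      {z ∈ ⋃ k, Wε k | ¬∃ y ∈ ⋃ k, Wε k, ∀ j, f y j + ε < f z j} := by
  rintro z ⟨hz1, hz2⟩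
  obtain ⟨_, ⟨k, rfl⟩, hzk⟩ := hz1
  have hzk : z ∈ W k := hzk
  rw [hW k] at hzk
  obtain ⟨hzY, hznd⟩ := hzk
  -- p must be positive
  have hp : 0 < p := by
    by_contra h
    push_neg at h
    exact hznd ⟨z, hzY, fun j => absurd j.2 (by omega)⟩
  constructor
  · -- z ∈ ⋃ Wε
    refine Set.mem_iUnion.2 ⟨k, ?_⟩
    rw [hWε k]
    refine ⟨hzY, ?_⟩
    rintro ⟨y, hyY, hlt⟩
    exact hznd ⟨y, hyY, fun j => lt_of_le_of_lt (by linarith) (hlt j)⟩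
  · rintro ⟨y, hy1, hylt⟩
    obtain ⟨_, ⟨l, rfl⟩, hyl⟩ := hy1
    have hyl : y ∈ Wε l := hyl
    rw [hWε l] at hyl
    obtain ⟨hyY, -⟩ := hyl
    obtain ⟨w, hwY, hwle, hwnd⟩ := exists_weak_dom hp (Y l) (hYc l) (fk l) (hfk l) hyY
    refine hz2 ⟨w, Set.mem_iUnion.2 ⟨l, ?_⟩, ?_⟩
    · rw [hW l]; exact ⟨hwY, hwnd⟩
    · intro j
      have h1 := hgap l w hwY j
      have h2 := hwle j
      have h3 := hle l y hyY j
      have h4 := hylt j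
      linarith
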